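/- Let ψ₁ = e₁ and ψ₂ = e^{iλ} sin(α) e₁ + cos(α) e₂ be unit vectors in ℂ^k (k ≥ 2) where {e₁,...,e_k} is an orthonormal basis. Then the operator A = |ψ₁⟩⟨ψ₂| − |ψ₂⟩⟨ψ₁| + ⟨ψ₁|ψ₂⟩𝕀_k satisfies: the eigenvalues of A A† are 1 (with multiplicity 2) and sin²α (with multiplicity k−2). -/

import Mathlib

open Matrix Polynomial

noncomputable section

lemma stdBasisMatrix_apply'' {n : Type*} [DecidableEq n] (a b i j : n) (x : ℂ) :
    Matrix.single a b x i j = if i = a ∧ j = b then x else 0 := by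
  simp only [Matrix.single, of_apply]
  split_ifs with h1 h2 h2
  · rfl
  · exact absurd ⟨h1.1.symm, h1.2.symm⟩ h2
  · exact absurd ⟨h2.1.symm, h2.2.symm⟩ h1
  · rfl

lemma stdBasisMatrix_conjTranspose' {n : Type*} [DecidableEq n] (a b : n) (x : ℂ) :
    (Matrix.single a b x)ᴴ = Matrix.single b a (star x) := by
  ext i j
  simp only [conjTranspose_apply, stdBasisMatrix_apply'']
  split_ifs with h1 h2 h2
  · rfl
  · exact absurd ⟨h1.2, h1.1⟩ h2
  · exact absurd ⟨h2.2, h2.1⟩ h1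
  · exact star_zero _

lemma charpoly_diagonal' {n : Type*} [DecidableEq n] [Fintype n] (d : n → ℂ) :
    (diagonal d).charpoly = ∏ i, (X - C (d i)) := by
  have h : charmatrix (diagonal d) = diagonal (fun i => (X : ℂ[X]) - C (d i)) := by
    ext i j
    by_cases h : i = j
    · subst h; simp [charmatrix_apply_eq]
    · rw [charmatrix_apply_ne _ _ _ h, diagonal_apply_ne _ h, diagonal_apply_ne _ h, map_zero,
        neg_zero]
  rw [Matrix.charpoly, h, det_diagonal]

theorem stmt1 (k : ℕ) (hk : 2 ≤ k) (lam α : ℝ)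
    (ψ₁ ψ₂ : Fin k → ℂ)
    (hψ₁ : ψ₁ = (Pi.single (⟨0, by omega⟩ : Fin k) 1 : Fin k → ℂ))
    (hψ₂ : ψ₂ = (Complex.exp (Complex.I * lam) * Real.sin α) •
        (Pi.single (⟨0, by omega⟩ : Fin k) 1 : Fin k → ℂ)
      + (Real.cos α : ℂ) • (Pi.single (⟨1, by omega⟩ : Fin k) 1 : Fin k → ℂ))
    (A : Matrix (Fin k) (Fin k) ℂ)
    (hA : A = vecMulVec ψ₁ (star ψ₂) - vecMulVec ψ₂ (star ψ₁)
        + (star ψ₁ ⬝ᵥ ψ₂) • (1 : Matrix (Fin k) (Fin k) ℂ)) :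
    (A * Aᴴ).charpoly = (X - C 1) ^ 2 * (X - C ((Real.sin α : ℂ) ^ 2)) ^ (k - 2) := by
  obtain ⟨i0, hi0⟩ : ∃ i : Fin k, (⟨0, by omega⟩ : Fin k) = i := ⟨_, rfl⟩
  obtain ⟨i1, hi1⟩ : ∃ i : Fin k, (⟨1, by omega⟩ : Fin k) = i := ⟨_, rfl⟩
  rw [hi0] at hψ₁ hψ₂
  rw [hi1] at hψ₂
  have h01 : i0 ≠ i1 := by rw [← hi0, ← hi1]; simp [Fin.ext_iff]
  obtain ⟨z, hz⟩ : ∃ z : ℂ, Complex.exp (Complex.I * lam) * Real.sin α = z := ⟨_, rfl⟩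
  rw [hz] at hψ₂
  obtain ⟨c, hc⟩ : ∃ c : ℂ, (Real.cos α : ℂ) = c := ⟨_, rfl⟩
  rw [hc] at hψ₂
  have hcc : star c = c := by rw [← hc]; exact Complex.conj_ofReal _
  obtain ⟨s2, hs2eq⟩ : ∃ s : ℂ, ((Real.sin α : ℂ)) ^ 2 = s := ⟨_, rfl⟩
  rw [hs2eq]
  have hzz : z * (starRingEnd ℂ) z = s2 := by
    rw [← hz, ← hs2eq]
    have h1 : (starRingEnd ℂ) (Complex.exp (Complex.I * lam) * (Real.sin α : ℂ))
        = Complex.exp (-(Complex.I * lam)) * (Real.sin α : ℂ) := by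
      rw [_root_.map_mul, ← Complex.exp_conj, _root_.map_mul, Complex.conj_I,
        Complex.conj_ofReal, Complex.conj_ofReal]
      ring_nf
    rw [h1]
    have h2 : Complex.exp (Complex.I * lam) * (Real.sin α : ℂ)
        * (Complex.exp (-(Complex.I * lam)) * (Real.sin α : ℂ))
        = (Complex.exp (Complex.I * lam) * Complex.exp (-(Complex.I * lam)))
          * ((Real.sin α : ℂ) * (Real.sin α : ℂ)) := by ring
    rw [h2, ← Complex.exp_add, add_neg_cancel, Complex.exp_zero, one_mul, sq]
  have hsc : c ^ 2 + s2 = 1 := by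
    rw [← hc, ← hs2eq]; norm_cast; rw [add_comm]; exact Real.sin_sq_add_cos_sq α
  have hs1 : star (Pi.single i0 1 : Fin k → ℂ) = (Pi.single i0 1 : Fin k → ℂ) := by
    ext x; simp [Pi.single_apply, apply_ite (star : ℂ → ℂ)]
  have hs2 : star (Pi.single i1 1 : Fin k → ℂ) = (Pi.single i1 1 : Fin k → ℂ) := by
    ext x; simp [Pi.single_apply, apply_ite (star : ℂ → ℂ)]
  have hsψ₂ : star ψ₂ = star z • (Pi.single i0 1 : Fin k → ℂ) + c • (Pi.single i1 1 : Fin k → ℂ) := by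
    rw [hψ₂, star_add, star_smul, star_smul, hs1, hs2, hcc]
  have hP : vecMulVec ψ₁ (star ψ₂)
      = Matrix.single i0 i0 (star z) + Matrix.single i0 i1 c := by
    ext i j
    rw [hψ₁, hsψ₂]
    simp only [vecMulVec_apply, Pi.add_apply, Pi.smul_apply, Pi.single_apply, smul_eq_mul,
      Matrix.add_apply, stdBasisMatrix_apply'']
    rcases eq_or_ne i i0 with hi | hi
    · rcases eq_or_ne j i0 with hj | hj
      · have hj1 : j ≠ i1 := by rw [hj]; exact h01
        simp [hi, hj, hj1]
      · rcases eq_or_ne j i1 with hj1 | hj1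
        · simp [hi, hj, hj1]
        · simp [hi, hj, hj1]
    · simp [hi]
  have hQ : vecMulVec ψ₂ (star ψ₁)
      = Matrix.single i0 i0 z + Matrix.single i1 i0 c := by
    ext i j
    rw [hψ₁, hψ₂, hs1]
    simp only [vecMulVec_apply, Pi.add_apply, Pi.smul_apply, Pi.single_apply, smul_eq_mul,
      Matrix.add_apply, stdBasisMatrix_apply'']
    rcases eq_or_ne j i0 with hj | hj
    · rcases eq_or_ne i i0 with hi | hi
      · have hi1 : i ≠ i1 := by rw [hi]; exact h01
        simp [hi, hj, hi1]
      · rcases eq_or_ne i i1 with hi1 | hi1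
        · simp [hi, hj, hi1]
        · simp [hi, hj, hi1]
    · simp [hj]
  have hdot : star ψ₁ ⬝ᵥ ψ₂ = z := by
    rw [hψ₁, hψ₂, hs1, single_dotProduct]
    simp [Pi.single_apply, h01, Ne.symm h01]
  have hA' : A = (Matrix.single i0 i0 (star z) + Matrix.single i0 i1 c)
      - (Matrix.single i0 i0 z + Matrix.single i1 i0 c) + z • 1 := by
    rw [hA, hP, hQ, hdot]
  have hAH : Aᴴ = (Matrix.single i0 i0 z + Matrix.single i1 i0 c)
      - (Matrix.single i0 i0 (star z) + Matrix.single i0 i1 c)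
      + star z • 1 := by
    rw [hA']
    simp only [conjTranspose_add, conjTranspose_sub, conjTranspose_smul,
      stdBasisMatrix_conjTranspose', star_star, conjTranspose_one, hcc]
  have hdiag : A * Aᴴ
      = diagonal (fun i => if i = i0 ∨ i = i1 then 1 else s2) := by
    rw [hAH, hA']
    simp only [sub_mul, mul_sub, add_mul, mul_add, smul_mul_assoc, mul_smul_comm, smul_smul,
      one_mul, mul_one, single_mul_single_same, Matrix.single_mul_single_of_ne _ _ _ _ h01,
      Matrix.single_mul_single_of_ne _ _ _ _ (Ne.symm h01), smul_add, smul_sub, smul_single,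
      smul_eq_mul, smul_zero, mul_zero, add_zero, sub_zero, zero_sub, zero_add]
    ext i j
    simp only [Matrix.add_apply, Matrix.sub_apply, Matrix.smul_apply, one_apply, diagonal_apply, smul_eq_mul,
      stdBasisMatrix_apply'', Matrix.neg_apply, Matrix.zero_apply, Complex.star_def]
    rcases eq_or_ne i i0 with hi | hi
    · rcases eq_or_ne j i0 with hj | hj
      · simp [hi, hj, h01, Ne.symm h01]
        linear_combination hzz + hsc
      · rcases eq_or_ne j i1 with hj1 | hj1
        · simp [hi, hj1, h01, Ne.symm h01]
        · simp [hi, h01, Ne.symm h01, hj, Ne.symm hj, hj1, Ne.symm hj1]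
    · rcases eq_or_ne i i1 with hi1 | hi1
      · rcases eq_or_ne j i0 with hj | hj
        · simp [hi1, hj, h01, Ne.symm h01]
          ring
        · rcases eq_or_ne j i1 with hj1 | hj1
          · simp [hi1, hj1, h01, Ne.symm h01]
            linear_combination hzz + hsc
          · simp [hi1, h01, Ne.symm h01, hj, Ne.symm hj, hj1, Ne.symm hj1, hi, Ne.symm hi]
      · rcases eq_or_ne i j with hij | hij
        · simp [← hij, h01, Ne.symm h01, hi, Ne.symm hi, hi1, Ne.symm hi1]
          linear_combination hzz
        · simp [h01, Ne.symm h01, hi, Ne.symm hi, hi1, Ne.symm hi1, hij, Ne.symm hij]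
  rw [hdiag, charpoly_diagonal']
  have hite : ∀ i : Fin k, (X : ℂ[X]) - C (if i = i0 ∨ i = i1 then 1 else s2)
      = if i = i0 ∨ i = i1 then X - C 1 else X - C s2 := by
    intro i; split_ifs <;> rfl
  simp only [hite]
  rw [Finset.prod_ite, Finset.prod_const, Finset.prod_const]
  have hcard1 : (Finset.filter (fun i : Fin k => i = i0 ∨ i = i1) Finset.univ).card = 2 := by
    have hfilt : Finset.filter (fun i : Fin k => i = i0 ∨ i = i1) Finset.univ = {i0, i1} := by
      ext i; simp
    rw [hfilt, Finset.card_insert_of_notMem (by simp [h01]), Finset.card_singleton]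
  have hcard2 : (Finset.filter (fun i : Fin k => ¬(i = i0 ∨ i = i1)) Finset.univ).card = k - 2 := by
    rw [Finset.filter_not, Finset.card_sdiff_of_subset (Finset.filter_subset _ _), hcard1]
    simp
  rw [hcard1, hcard2]
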